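/- Let (λ, ρ, s) be a homothetic datum on a ring R and define a ⋄ b = a·b + ρ(a) + λ(b) + s. Then there exists an absorber for ⋄ (an element e ∈ R with a ⋄ e = e and e ⋄ a = e for all a ∈ R) if and only if the double homothetism is inner, i.e., there exists b ∈ R with λ(a) = b·a and ρ(a) = a·b for all a ∈ R. -/
import Mathlib


/-- The homothetic truss multiplication `a ⋄ b = a·b + ρ(a) + λ(b) + s` has an
absorber iff the double homothetism `(λ, ρ)` is inner. -/
theorem homothetic_truss_absorber_iff_inner {R : Type*} [NonUnitalRing R]
    (lam rho : R →+ R) (s : R)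
    (hlam : ∀ a b : R, lam (a * b) = lam a * b)
    (hrho : ∀ a b : R, rho (a * b) = a * rho b)
    (hmid : ∀ a b : R, a * lam b = rho a * b)
    (hperm : ∀ a : R, rho (lam a) = lam (rho a))
    (hs : lam s = rho s)
    (hll : ∀ a : R, lam (lam a) = lam a + s * a)
    (hrr : ∀ a : R, rho (rho a) = rho a + a * s) :
    (∃ e : R, ∀ a : R,
        (a * e + rho a + lam e + s = e) ∧ (e * a + rho e + lam a + s = e))
      ↔ (∃ b : R, ∀ a : R, lam a = b * a ∧ rho a = a * b) := by
  constructor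
  · rintro ⟨e, he⟩
    refine ⟨-e, fun a => ?_⟩
    have h1 : lam e + s = e := by
      have := (he 0).1
      simpa using this
    have h2 : rho e + s = e := by
      have := (he 0).2
      simpa using this
    constructor
    · -- lam a = -e * a
      have key : e * a + lam a = 0 := by
        calc e * a + lam a
            = (e * a + rho e + lam a + s) - (rho e + s) := by abel
          _ = e - e := by rw [(he a).2, h2]
          _ = 0 := sub_self e
      rw [neg_mul, eq_neg_iff_add_eq_zero, add_comm]
      exact key
    · have key : a * e + rho a = 0 := by
        calc a * e + rho a
            = (a * e + rho a + lam e + s) - (lam e + s) := by abel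
          _ = e - e := by rw [(he a).1, h1]
          _ = 0 := sub_self e
      rw [mul_neg, eq_neg_iff_add_eq_zero, add_comm]
      exact key
  · rintro ⟨b, hb⟩
    have h1 : ∀ a : R, b * (b * a) = b * a + s * a := fun a => by
      have := hll a
      rwa [(hb a).1, (hb (b * a)).1] at this
    have h2 : ∀ a : R, (a * b) * b = a * b + a * s := fun a => by
      have := hrr a
      rwa [(hb a).2, (hb (a * b)).2] at this
    have hsb : b * s = s * b := by
      have := hs; rwa [(hb s).1, (hb s).2] at this
    refine ⟨s - b * b, fun a => ?_⟩
    rw [(hb a).1, (hb a).2, (hb (s - b * b)).1, (hb (s - b * b)).2]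
    constructor
    · calc a * (s - b * b) + a * b + b * (s - b * b) + s
          = a * s - (a * b) * b + a * b + (b * s - b * (b * b)) + s := by
            rw [mul_sub, mul_sub, mul_assoc]
        _ = a * s - (a * b + a * s) + a * b + (s * b - (b * b + s * b)) + s := by
            rw [h2 a, h1 b, hsb]
        _ = s - b * b := by abel
    · calc (s - b * b) * a + (s - b * b) * b + b * a + s
          = s * a - b * (b * a) + (s * b - b * (b * b)) + b * a + s := by
            rw [sub_mul, sub_mul, mul_assoc, mul_assoc]
        _ = s * a - (b * a + s * a) + (s * b - (b * b + s * b)) + b * a + s := by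
            rw [h1 a, h1 b]
        _ = s - b * b := by abel
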